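/- The operators D₁ and D₃ do not commute: there exist a 2×2 complex matrix valued polynomial P and a real number x such that ((P·D₃)·D₁)(x) ≠ ((P·D₁)·D₃)(x). Consequently, the algebra of right-acting differential operators having all the polynomials P_w as simultaneous eigenfunctions is noncommutative. -/

import Mathlib

open scoped BigOperators Matrix

noncomputable section

/-- Gegenbauer polynomials `C_k^lam` with natural number index, defined by the
three-term recurrence. -/
def Geg (lam : ℝ) : ℕ → ℝ → ℝ
  | 0 => fun _ => 1
  | 1 => fun x => 2 * lam * x
  | (k + 2) => fun x =>
      (2 * ((k : ℝ) + 2 + lam - 1) * x * Geg lam (k + 1) x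
        - ((k : ℝ) + 2 + 2 * lam - 2) * Geg lam k x) / ((k : ℝ) + 2)

/-- Gegenbauer polynomials with integer index, equal to `0` for negative index. -/
def GegZ (lam : ℝ) (k : ℤ) (x : ℝ) : ℝ :=
  if k < 0 then 0 else Geg lam k.toNat x

/-- The 2×2 matrix valued polynomials `P_w`. -/
def Pw (p n : ℝ) (w : ℕ) (x : ℝ) : Matrix (Fin 2) (Fin 2) ℂ :=
  !![(((1 / (n + 1)) * GegZ ((n + 1) / 2) (w : ℤ) x
        + (1 / (p + w)) * GegZ ((n + 3) / 2) ((w : ℤ) - 2) x : ℝ) : ℂ),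
     (((1 / (p + w)) * GegZ ((n + 3) / 2) ((w : ℤ) - 1) x : ℝ) : ℂ);
     (((1 / (n - p + w)) * GegZ ((n + 3) / 2) ((w : ℤ) - 1) x : ℝ) : ℂ),
     (((1 / (n + 1)) * GegZ ((n + 1) / 2) (w : ℤ) x
        + (1 / (n - p + w)) * GegZ ((n + 3) / 2) ((w : ℤ) - 2) x : ℝ) : ℂ)]

/-- The weight matrix `W_{p,n}` on `(-1,1)`. -/
def Wmat (p n : ℝ) (x : ℝ) : Matrix (Fin 2) (Fin 2) ℂ :=
  (((1 - x ^ 2) ^ (n / 2 - 1) : ℝ) : ℂ) •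
    !![((p * x ^ 2 + n - p : ℝ) : ℂ), ((-(n * x) : ℝ) : ℂ);
       ((-(n * x) : ℝ) : ℂ), (((n - p) * x ^ 2 + p : ℝ) : ℂ)]

/-- Entrywise derivative of a matrix valued function. -/
def mderiv (P : ℝ → Matrix (Fin 2) (Fin 2) ℂ) : ℝ → Matrix (Fin 2) (Fin 2) ℂ :=
  fun x => Matrix.of fun i j => deriv (fun t => P t i j) x

/-- The matrix valued inner product `⟨P,Q⟩ = ∫_{-1}^{1} P(x) W(x) Q(x)^* dx`. -/
def mint (p n : ℝ) (P Q : ℝ → Matrix (Fin 2) (Fin 2) ℂ) : Matrix (Fin 2) (Fin 2) ℂ :=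
  Matrix.of fun i j => ∫ x in (-1 : ℝ)..1, (P x * Wmat p n x * (Q x)ᴴ) i j

/-- A matrix valued function is polynomial if each entry is given by a polynomial. -/
def IsPolyMat (P : ℝ → Matrix (Fin 2) (Fin 2) ℂ) : Prop :=
  ∀ i j, ∃ q : Polynomial ℂ, ∀ x : ℝ, P x i j = q.eval (x : ℂ)


/-- The right-acting differential operator `D₁`. -/
def actD1 (p n : ℝ) (P : ℝ → Matrix (Fin 2) (Fin 2) ℂ) (x : ℝ) :
    Matrix (Fin 2) (Fin 2) ℂ :=
  mderiv (mderiv P) x * !![(x : ℂ) ^ 2, (x : ℂ); -(x : ℂ), -1]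
    + mderiv P x * !![((n : ℂ) + 2) * (x : ℂ), (n : ℂ) - (p : ℂ) + 2; -(p : ℂ), 0]
    + P x * !![(p : ℂ) * ((n : ℂ) - (p : ℂ) + 1), 0; 0, 0]

/-- The right-acting differential operator `D₂`. -/
def actD2 (p n : ℝ) (P : ℝ → Matrix (Fin 2) (Fin 2) ℂ) (x : ℝ) :
    Matrix (Fin 2) (Fin 2) ℂ :=
  mderiv (mderiv P) x * !![-1, -(x : ℂ); (x : ℂ), (x : ℂ) ^ 2]
    + mderiv P x * !![0, (p : ℂ) - (n : ℂ); (p : ℂ) + 2, ((n : ℂ) + 2) * (x : ℂ)]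
    + P x * !![0, 0; 0, ((p : ℂ) + 1) * ((n : ℂ) - (p : ℂ))]

/-- The right-acting differential operator `D₃`. -/
def actD3 (p n : ℝ) (P : ℝ → Matrix (Fin 2) (Fin 2) ℂ) (x : ℝ) :
    Matrix (Fin 2) (Fin 2) ℂ :=
  mderiv (mderiv P) x * !![-(x : ℂ), -1; (x : ℂ) ^ 2, (x : ℂ)]
    + mderiv P x * !![-(p : ℂ), 0; 2 * ((p : ℂ) + 1) * (x : ℂ), (p : ℂ) + 2]
    + P x * !![0, 0; (p : ℂ) * ((p : ℂ) + 1), 0]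

/-- The right-acting differential operator `D₄`. -/
def actD4 (p n : ℝ) (P : ℝ → Matrix (Fin 2) (Fin 2) ℂ) (x : ℝ) :
    Matrix (Fin 2) (Fin 2) ℂ :=
  mderiv (mderiv P) x * !![(x : ℂ), (x : ℂ) ^ 2; -1, -(x : ℂ)]
    + mderiv P x * !![(n : ℂ) - (p : ℂ) + 2, 2 * ((n : ℂ) - (p : ℂ) + 1) * (x : ℂ);
                      0, (p : ℂ) - (n : ℂ)]
    + P x * !![0, ((n : ℂ) - (p : ℂ)) * ((n : ℂ) - (p : ℂ) + 1); 0, 0]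

/-- the operators `D₁` and `D₃` do not commute: there are a matrix
valued polynomial `P` and a point `x` with `((P·D₃)·D₁)(x) ≠ ((P·D₁)·D₃)(x)`. -/
lemma mderiv_const (C : Matrix (Fin 2) (Fin 2) ℂ) :
    mderiv (fun _ => C) = fun _ => 0 := by
  funext x
  ext i j
  simp [mderiv]

theorem statement17 (p n : ℝ) (hp : 0 < p) (hpn : p < n) :
    ∃ P : ℝ → Matrix (Fin 2) (Fin 2) ℂ, IsPolyMat P ∧
      ∃ x : ℝ, actD1 p n (actD3 p n P) x ≠ actD3 p n (actD1 p n P) x := by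
  refine ⟨fun _ => 1, fun i j => ⟨Polynomial.C ((1 : Matrix (Fin 2) (Fin 2) ℂ) i j),
    fun x => by simp⟩, 0, ?_⟩
  set A : Matrix (Fin 2) (Fin 2) ℂ := !![(p : ℂ) * ((n : ℂ) - (p : ℂ) + 1), 0; 0, 0]
  set B : Matrix (Fin 2) (Fin 2) ℂ := !![0, 0; (p : ℂ) * ((p : ℂ) + 1), 0]
  have h3 : actD3 p n (fun _ => (1 : Matrix (Fin 2) (Fin 2) ℂ)) = fun _ => B := by
    funext x
    simp [actD3, mderiv_const, B]
  have h1 : actD1 p n (fun _ => (1 : Matrix (Fin 2) (Fin 2) ℂ)) = fun _ => A := by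
    funext x
    simp [actD1, mderiv_const, A]
  rw [h3, h1]
  have hL : actD1 p n (fun _ => B) 0 = B * A := by
    simp [actD1, mderiv_const, A]
  have hR : actD3 p n (fun _ => A) 0 = A * B := by
    simp [actD3, mderiv_const, B]
  have hBA : (B * A) 1 0 = (p : ℂ) * ((p : ℂ) + 1) * ((p : ℂ) * ((n : ℂ) - (p : ℂ) + 1)) := by
    simp [A, B, Matrix.mul_apply, Fin.sum_univ_two]
  have hAB : (A * B) 1 0 = 0 := by
    simp [A, B, Matrix.mul_apply, Fin.sum_univ_two]
  rw [hL, hR]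
  intro h
  have h10 : (B * A) 1 0 = (A * B) 1 0 := by rw [h]
  rw [hBA, hAB] at h10
  have hr : p * (p + 1) * (p * (n - p + 1)) = 0 := by exact_mod_cast h10
  nlinarith [mul_pos (mul_pos hp (by linarith : (0:ℝ) < p + 1))
    (mul_pos hp (by linarith : (0:ℝ) < n - p + 1))]

end
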